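/- arXiv:2107.10978 — 3 statements merged into one kernel-verified Lean document; each statement's English description precedes it below -/
import Mathlib

section
/- For any real a > 0 and positive integer n, ∑_{k=1}^{n} k·ψ₀(k+a) = (1/2)(−a² + a + n² + n)ψ₀(a+n+1) + (1/2)a(a−1)ψ₀(a+1) + (1/4)n(2a − n − 3). -/
open Finset

/-- The `m`-th polygamma function: the `(m+1)`-th derivative of `log ∘ Γ`. -/
noncomputable def psi (m : ℕ) (x : ℝ) : ℝ :=
  iteratedDeriv (m + 1) (fun y => Real.log (Real.Gamma y)) x

lemma diff_logGamma {x : ℝ} (hx : 0 < x) :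
    DifferentiableAt ℝ (fun y => Real.log (Real.Gamma y)) x := by
  apply DifferentiableAt.log
  · exact Real.differentiableAt_Gamma (fun m => by nlinarith [Nat.cast_nonneg (α := ℝ) m])
  · exact (Real.Gamma_pos_of_pos hx).ne'

lemma psi0_add_one {x : ℝ} (hx : 0 < x) : psi 0 (x + 1) = psi 0 x + 1/x := by
  have h1 : psi 0 (x + 1) = deriv (fun y => Real.log (Real.Gamma (y + 1))) x := by
    simp [psi, iteratedDeriv_one]
    exact (deriv_comp_add_const _ 1 x).symm
  have heq : (fun y => Real.log (Real.Gamma (y + 1))) =ᶠ[nhds x]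
      (fun y => Real.log y + Real.log (Real.Gamma y)) := by
    filter_upwards [eventually_gt_nhds hx] with y hy
    rw [Real.Gamma_add_one hy.ne', Real.log_mul hy.ne' (Real.Gamma_pos_of_pos hy).ne']
  rw [h1, heq.deriv_eq, deriv_fun_add (Real.differentiableAt_log hx.ne') (diff_logGamma hx),
    Real.deriv_log]
  simp [psi, iteratedDeriv_one, one_div, add_comm]

theorem stmt_1 (a : ℝ) (ha : 0 < a) (n : ℕ) (hn : 0 < n) :
    ∑ k ∈ Icc 1 n, (k : ℝ) * psi 0 ((k : ℝ) + a) =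
      (1/2) * (-a^2 + a + n^2 + n) * psi 0 (a + n + 1) + (1/2) * a * (a - 1) * psi 0 (a + 1) +
        (1/4) * n * (2*a - n - 3) := by
  induction n with
  | zero => omega
  | succ n ih =>
    rcases Nat.eq_zero_or_pos n with hn0 | hn0
    · subst hn0
      have h2 : psi 0 (a + 1 + 1) = psi 0 (a + 1) + 1/(a+1) := psi0_add_one (by linarith)
      have ha1 : a + 1 ≠ 0 := by linarith
      simp only [Icc_self, sum_singleton, Nat.cast_one]
      rw [show a + (1:ℕ) + 1 = a + 1 + 1 by push_cast; ring, h2,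
        show (1:ℝ) + a = a + 1 by ring]
      push_cast
      field_simp
      ring
    · have h2 : psi 0 (a + n + 1 + 1) = psi 0 (a + n + 1) + 1/(a+n+1) :=
        psi0_add_one (by positivity)
      have han : a + n + 1 ≠ 0 := by positivity
      rw [sum_Icc_succ_top (by omega), ih hn0]
      push_cast
      rw [show ((n:ℝ)+1) + a = a + n + 1 by ring,
        show a + ((n:ℝ)+1) + 1 = a + n + 1 + 1 by ring, h2]
      field_simp
      ring
end

section
/- For any real a > 0 and positive integer n, ∑_{k=1}^{n} k·ψ₁(k+a) = (1/2)[(−a² + a + n² + n)ψ₁(a+n+1) + a(a−1)ψ₁(a+1) + (1−2a)ψ₀(a+n+1) + (2a−1)ψ₀(a+1) + n]. -/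
open Finset

private lemma analyticAt_RGamma {x : ℝ} (hx : 0 < x) : AnalyticAt ℝ Real.Gamma x := by
  have hC : AnalyticAt ℂ Complex.Gamma (x : ℂ) := by
    rw [Complex.analyticAt_iff_eventually_differentiableAt]
    have hmem : {z : ℂ | 0 < z.re} ∈ nhds (x : ℂ) :=
      (isOpen_lt continuous_const Complex.continuous_re).mem_nhds (by simpa using hx)
    filter_upwards [hmem] with z hz
    refine Complex.differentiableAt_Gamma z fun m => ?_
    intro h
    rw [h] at hz
    simp only [Complex.neg_re, Complex.natCast_re, Set.mem_setOf_eq] at hz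
    have : (0:ℝ) ≤ m := Nat.cast_nonneg m
    linarith
  have h1 : AnalyticAt ℝ (fun y : ℝ => (Complex.Gamma (y : ℝ)).re) x :=
    (Complex.reCLM.analyticAt _).comp ((hC.restrictScalars).comp
      (Complex.ofRealCLM.analyticAt x))
  exact h1.congr (Filter.Eventually.of_forall fun y => by
    show (Complex.Gamma (y : ℝ)).re = Real.Gamma y
    rw [Complex.Gamma_ofReal, Complex.ofReal_re])

private lemma contDiffAt_logGamma {x : ℝ} (hx : 0 < x) (n : ℕ) :
    ContDiffAt ℝ n (fun y => Real.log (Real.Gamma y)) x :=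
  (Real.contDiffAt_log.2 (Real.Gamma_pos_of_pos hx).ne').comp x
    (analyticAt_RGamma hx).contDiffAt

private lemma iteratedDerivWithin_isOpen' {n : ℕ} {s : Set ℝ} (hs : IsOpen s) {x : ℝ}
    (hx : x ∈ s) (f : ℝ → ℝ) : iteratedDerivWithin n f s x = iteratedDeriv n f x := by
  rw [iteratedDerivWithin_eq_iteratedFDerivWithin, iteratedDeriv_eq_iteratedFDeriv,
    iteratedFDerivWithin_of_isOpen n hs hx]

private lemma iteratedDeriv_add_at {n : ℕ} {f g : ℝ → ℝ} {x : ℝ}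
    (hf : ContDiffAt ℝ n f x) (hg : ContDiffAt ℝ n g x) :
    iteratedDeriv n (fun y => f y + g y) x = iteratedDeriv n f x + iteratedDeriv n g x := by
  obtain ⟨u, hu, hfu⟩ := hf.contDiffOn le_rfl (by simp)
  obtain ⟨v, hv, hgv⟩ := hg.contDiffOn le_rfl (by simp)
  have hxm : x ∈ interior (u ∩ v) := mem_interior_iff_mem_nhds.2 (Filter.inter_mem hu hv)
  have hsub : interior (u ∩ v) ⊆ u ∩ v := interior_subset
  have hf' : ContDiffOn ℝ n f (interior (u ∩ v)) :=
    hfu.mono (hsub.trans Set.inter_subset_left)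
  have hg' : ContDiffOn ℝ n g (interior (u ∩ v)) :=
    hgv.mono (hsub.trans Set.inter_subset_right)
  rw [← iteratedDerivWithin_isOpen' isOpen_interior hxm f,
    ← iteratedDerivWithin_isOpen' isOpen_interior hxm g,
    ← iteratedDerivWithin_isOpen' isOpen_interior hxm (fun y => f y + g y)]
  exact iteratedDerivWithin_add hxm isOpen_interior.uniqueDiffOn (hf' x hxm) (hg' x hxm)

private lemma psi_rec (m : ℕ) {x : ℝ} (hx : 0 < x) :
    psi m (x + 1) = psi m x + iteratedDeriv (m + 1) Real.log x := by
  have h1 : psi m (x + 1) =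
      iteratedDeriv (m + 1) (fun y => Real.log (Real.Gamma (y + 1))) x := by
    have := iteratedDeriv_comp_add_const (m + 1) (fun y => Real.log (Real.Gamma y)) 1
    exact (congrFun this x).symm
  have heq : (fun y => Real.log (Real.Gamma (y + 1))) =ᶠ[nhds x]
      fun y => Real.log y + Real.log (Real.Gamma y) := by
    filter_upwards [Ioi_mem_nhds hx] with y hy
    have hy' : (0:ℝ) < y := hy
    rw [Real.Gamma_add_one hy'.ne', Real.log_mul hy'.ne' (Real.Gamma_pos_of_pos hy').ne']
  rw [h1, heq.iteratedDeriv_eq (m + 1),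
    iteratedDeriv_add_at (Real.contDiffAt_log.2 hx.ne') (contDiffAt_logGamma hx (m + 1))]
  rw [psi, add_comm]

private lemma psi0_rec {x : ℝ} (hx : 0 < x) : psi 0 (x + 1) = psi 0 x + x⁻¹ := by
  rw [psi_rec 0 hx, iteratedDeriv_one, Real.deriv_log]

private lemma psi1_rec {x : ℝ} (hx : 0 < x) : psi 1 (x + 1) = psi 1 x - (x ^ 2)⁻¹ := by
  rw [psi_rec 1 hx, show (1 + 1 : ℕ) = 2 from rfl]
  have h2 : iteratedDeriv 2 Real.log x = -(x ^ 2)⁻¹ := by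
    rw [show (2:ℕ) = 1 + 1 from rfl, iteratedDeriv_succ, iteratedDeriv_one, Real.deriv_log']
    exact deriv_inv
  rw [h2]; ring

theorem stmt_4 (a : ℝ) (ha : 0 < a) (n : ℕ) (hn : 0 < n) :
    ∑ k ∈ Icc 1 n, (k : ℝ) * psi 1 ((k : ℝ) + a) =
      (1/2) * ((-a^2 + a + n^2 + n) * psi 1 (a + n + 1) + a * (a - 1) * psi 1 (a + 1) +
        (1 - 2*a) * psi 0 (a + n + 1) + (2*a - 1) * psi 0 (a + 1) + n) := by
  induction n with
  | zero => exact absurd hn (lt_irrefl 0)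
  | succ n ih =>
    rcases Nat.eq_zero_or_pos n with rfl | hn'
    · -- base case n = 1
      have h1 : (0:ℝ) < a + 1 := by linarith
      rw [show (0:ℕ)+1 = 1 from rfl, Finset.Icc_self, Finset.sum_singleton]
      push_cast
      rw [show (1:ℝ) + a = a + 1 by ring, show a + 1 + 1 = (a + 1) + 1 from rfl,
        psi1_rec h1, psi0_rec h1]
      field_simp
      ring
    · have ih' := ih hn'
      rw [Finset.sum_Icc_succ_top (by omega : 1 ≤ n + 1), ih']
      have hx : (0:ℝ) < a + n + 1 := by positivity
      have hne : a + (n:ℝ) + 1 ≠ 0 := hx.ne'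
      push_cast
      rw [show (n:ℝ) + 1 + a = a + (n:ℝ) + 1 by ring,
        show a + ((n:ℝ) + 1) + 1 = (a + (n:ℝ) + 1) + 1 by ring,
        psi1_rec hx, psi0_rec hx]
      field_simp
      ring
end

section
/- For positive integers m ≤ n, ∑_{k=1}^{m} (n−k)!/((m−k)! k) · ψ₀(n+1−k) = (n!/m!)·[ψ₁(n+1) − ψ₁(n−m+1) + ψ₀(n+1)(ψ₀(n+1) − ψ₀(n−m+1))]. -/
open Finset

open scoped ContDiff

/-- log Gamma is C^∞ on (0, ∞). -/
lemma contDiffOn_logGamma : ContDiffOn ℝ ∞ (fun y => Real.log (Real.Gamma y)) (Set.Ioi 0) := by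
  intro x hx
  have hx' : (0:ℝ) < x := hx
  have hopen : IsOpen {s : ℂ | 0 < s.re} := isOpen_lt continuous_const Complex.continuous_re
  have hdiff : DifferentiableOn ℂ Complex.Gamma {s : ℂ | 0 < s.re} := by
    intro s hs
    refine (Complex.differentiableAt_Gamma s fun m => ?_).differentiableWithinAt
    intro h
    have : (0:ℝ) < s.re := hs
    rw [h] at this
    simp at this
    have h2 : (0:ℝ) ≤ (m:ℝ) := by positivity
    linarith
  have hmem : (x:ℂ) ∈ {s : ℂ | 0 < s.re} := by simpa using hx'
  have hA : AnalyticAt ℂ Complex.Gamma (x:ℂ) := hdiff.analyticAt (hopen.mem_nhds hmem)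
  have hA2 : AnalyticAt ℝ (fun y : ℝ => (Complex.Gamma (y:ℂ)).re) x := by
    exact (Complex.reCLM.analyticAt _).comp ((hA.restrictScalars).comp (Complex.ofRealCLM.analyticAt x))
  have hG : AnalyticAt ℝ Real.Gamma x := by
    have : (fun y : ℝ => (Complex.Gamma (y:ℂ)).re) = Real.Gamma := by
      funext y; rw [Complex.Gamma_ofReal]; simp
    rwa [this] at hA2
  have hGc : ContDiffAt ℝ ∞ Real.Gamma x := hG.contDiffAt
  have hlog : ContDiffAt ℝ ∞ Real.log (Real.Gamma x) :=
    Real.contDiffAt_log.2 (Real.Gamma_pos_of_pos hx').ne'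
  exact (hlog.comp x hGc).contDiffWithinAt


noncomputable def lG : ℝ → ℝ := fun y => Real.log (Real.Gamma y)

lemma lG_diffAt {x : ℝ} (hx : 0 < x) : DifferentiableAt ℝ lG x := by
  have := (contDiffOn_logGamma x hx).contDiffAt ((isOpen_Ioi).mem_nhds hx)
  exact this.differentiableAt (by norm_num)

lemma dlG_contDiffOn : ContDiffOn ℝ ∞ (deriv lG) (Set.Ioi 0) :=
  ((contDiffOn_infty_iff_deriv_of_isOpen isOpen_Ioi).1 contDiffOn_logGamma).2

lemma dlG_diffAt {x : ℝ} (hx : 0 < x) : DifferentiableAt ℝ (deriv lG) x := by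
  have := (dlG_contDiffOn x hx).contDiffAt ((isOpen_Ioi).mem_nhds hx)
  exact this.differentiableAt (by norm_num)

lemma lG_eqOn : Set.EqOn (fun y => lG (y + 1)) (fun y => Real.log y + lG y) (Set.Ioi 0) := by
  intro y hy
  have hy' : (0:ℝ) < y := hy
  simp only [lG]
  rw [Real.Gamma_add_one hy'.ne', Real.log_mul hy'.ne' (Real.Gamma_pos_of_pos hy').ne']

lemma rec0 {x : ℝ} (hx : 0 < x) : deriv lG (x + 1) = deriv lG x + 1 / x := by
  have h1 : deriv (fun y => lG (y + 1)) x = deriv lG (x + 1) := deriv_comp_add_const lG 1 x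
  have h2 : deriv (fun y => lG (y + 1)) x = deriv (fun y => Real.log y + lG y) x := by
    apply Filter.EventuallyEq.deriv_eq
    exact Filter.eventuallyEq_of_mem (isOpen_Ioi.mem_nhds hx) lG_eqOn
  have h3 : deriv (fun y => Real.log y + lG y) x = 1 / x + deriv lG x := by
    rw [deriv_fun_add (Real.differentiableAt_log hx.ne') (lG_diffAt hx), Real.deriv_log, one_div]
  rw [← h1, h2, h3]; ring

lemma dlG_eqOn : Set.EqOn (fun y => deriv lG (y + 1)) (fun y => y⁻¹ + deriv lG y) (Set.Ioi 0) := by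
  intro y hy
  have : (0:ℝ) < y := hy
  simp only [rec0 this]; rw [one_div]; ring

lemma rec1 {x : ℝ} (hx : 0 < x) :
    deriv (deriv lG) (x + 1) = deriv (deriv lG) x - 1 / x ^ 2 := by
  have h1 : deriv (fun y => deriv lG (y + 1)) x = deriv (deriv lG) (x + 1) :=
    deriv_comp_add_const (deriv lG) 1 x
  have h2 : deriv (fun y => deriv lG (y + 1)) x = deriv (fun y => y⁻¹ + deriv lG y) x := by
    apply Filter.EventuallyEq.deriv_eq
    exact Filter.eventuallyEq_of_mem (isOpen_Ioi.mem_nhds hx) dlG_eqOn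
  have h3 : deriv (fun y : ℝ => y⁻¹ + deriv lG y) x = -(x ^ 2)⁻¹ + deriv (deriv lG) x := by
    rw [deriv_fun_add (differentiableAt_inv hx.ne') (dlG_diffAt hx), deriv_inv]
  rw [← h1, h2, h3]; ring

lemma shift0 {x : ℝ} (hx : 0 < x) (t : ℕ) :
    deriv lG (x + t) = deriv lG x + ∑ j ∈ range t, 1 / (x + j) := by
  induction t with
  | zero => simp
  | succ t ih =>
      have hxt : 0 < x + t := by positivity
      have : (x + (t + 1 : ℕ) : ℝ) = (x + t) + 1 := by push_cast; ring
      rw [this, rec0 hxt, ih, sum_range_succ]; ring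

lemma shift1 {x : ℝ} (hx : 0 < x) (t : ℕ) :
    deriv (deriv lG) (x + t) = deriv (deriv lG) x - ∑ j ∈ range t, 1 / (x + j) ^ 2 := by
  induction t with
  | zero => simp
  | succ t ih =>
      have hxt : 0 < x + t := by positivity
      have : (x + (t + 1 : ℕ) : ℝ) = (x + t) + 1 := by push_cast; ring
      rw [this, rec1 hxt, ih, sum_range_succ]; ring

noncomputable def ff (x : ℝ) (k : ℕ) : ℝ := ∏ j ∈ range k, (x - j)

lemma ff_zero (x : ℝ) : ff x 0 = 1 := by simp [ff]

lemma ff_succ (x : ℝ) (k : ℕ) : ff x (k + 1) = ff x k * (x - k) := prod_range_succ _ _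

lemma ff_succ' (x : ℝ) (k : ℕ) : ff (x + 1) (k + 1) = ff x k * (x + 1) := by
  rw [ff, prod_range_succ']
  simp only [Nat.cast_zero, sub_zero]
  congr 1
  refine prod_congr rfl fun j _ => ?_
  push_cast; ring

lemma ff_pos {N k : ℕ} (h : k ≤ N) : 0 < ff (N : ℝ) k := by
  induction k with
  | zero => simp [ff_zero]
  | succ k ih =>
      rw [ff_succ]
      have hk : k < N := h
      have h1 : 0 < (N : ℝ) - k := by
        have : (k : ℝ) < N := by exact_mod_cast hk
        linarith
      exact mul_pos (ih hk.le) h1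

lemma ff_self_succ (p : ℕ) : ff (p : ℝ) (p + 1) = 0 := by
  rw [ff_succ]; simp

lemma ff_factorial {N k : ℕ} (h : k ≤ N) :
    ff (N : ℝ) k * (Nat.factorial (N - k) : ℝ) = (Nat.factorial N : ℝ) := by
  induction k with
  | zero => simp [ff_zero]
  | succ k ih =>
      have hk : k < N := h
      have h1 : N - k = (N - (k + 1)) + 1 := by omega
      have h2 : (Nat.factorial (N - k) : ℝ) = ((N : ℝ) - k) * (Nat.factorial (N - (k + 1)) : ℝ) := by
        rw [h1, Nat.factorial_succ]
        have h3 : ((N - (k + 1) + 1 : ℕ) : ℝ) = (N : ℝ) - k := by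
          push_cast [Nat.cast_sub h]; ring
        push_cast [h3]; ring
      rw [← ih hk.le, h2, ff_succ]; ring

lemma key_tele {p n k : ℕ} (hk : k ≤ p) (h : p < n) :
    ff (p : ℝ) k / ff (n : ℝ) (k + 1) =
      (ff p k / ff n k - ff p (k + 1) / ff n (k + 1)) / ((n : ℝ) - p) := by
  have hkn : k < n := lt_of_le_of_lt hk h
  have h1 : (0:ℝ) < ff (n : ℝ) k := ff_pos hkn.le
  have h2 : (0:ℝ) < ff (n : ℝ) (k + 1) := ff_pos hkn
  have hnp : (0:ℝ) < (n : ℝ) - p := by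
    have : (p : ℝ) < n := by exact_mod_cast h
    linarith
  have hnk : (0:ℝ) < (n : ℝ) - k := by
    have : (k : ℝ) < n := by exact_mod_cast hkn
    linarith
  rw [ff_succ (p:ℝ), ff_succ (n:ℝ)]
  field_simp
  ring

lemma keyR {p n : ℕ} (h : p < n) :
    ∑ k ∈ range (p + 1), ff (p : ℝ) k / ff (n : ℝ) (k + 1) = 1 / ((n : ℝ) - p) := by
  have := Finset.sum_range_sub' (fun k => ff (p:ℝ) k / ff (n:ℝ) k / ((n:ℝ) - p)) (p + 1)
  calc ∑ k ∈ range (p + 1), ff (p : ℝ) k / ff (n : ℝ) (k + 1)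
      = ∑ k ∈ range (p + 1),
          (ff (p:ℝ) k / ff (n:ℝ) k / ((n:ℝ) - p) - ff (p:ℝ) (k+1) / ff (n:ℝ) (k+1) / ((n:ℝ) - p)) := by
        refine sum_congr rfl fun k hk => ?_
        rw [key_tele (Nat.lt_succ_iff.1 (mem_range.1 hk)) h]
        ring
    _ = ff (p:ℝ) 0 / ff (n:ℝ) 0 / ((n:ℝ) - p) - ff (p:ℝ) (p+1) / ff (n:ℝ) (p+1) / ((n:ℝ) - p) := this
    _ = 1 / ((n : ℝ) - p) := by rw [ff_zero, ff_zero, ff_self_succ]; ring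

lemma ff_step (p k : ℕ) :
    ff ((p:ℝ) + 1) (k + 1) = ff (p:ℝ) (k + 1) + ((k:ℝ) + 1) * ff (p:ℝ) k := by
  rw [ff_succ' , ff_succ]; ring

lemma keyA {n : ℕ} : ∀ p, p ≤ n →
    ∑ k ∈ range p, ff (p : ℝ) (k + 1) / (ff (n : ℝ) (k + 1) * ((k:ℝ) + 1)) =
      ∑ j ∈ range p, 1 / ((n : ℝ) - j) := by
  intro p
  induction p with
  | zero => simp
  | succ p ih =>
      intro hp
      have hpn : p < n := hp
      have hsplit : ∀ k ∈ range (p + 1),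
          ff ((p:ℕ)+1 : ℕ) (k + 1) / (ff (n : ℝ) (k + 1) * ((k:ℝ) + 1)) =
            ff (p:ℝ) (k + 1) / (ff (n : ℝ) (k + 1) * ((k:ℝ) + 1)) +
              ff (p:ℝ) k / ff (n:ℝ) (k + 1) := by
        intro k hk
        have hkn : k < n := lt_of_le_of_lt (Nat.lt_succ_iff.1 (mem_range.1 hk)) hpn
        have h2 : (0:ℝ) < ff (n : ℝ) (k + 1) := ff_pos hkn
        have hc : ((p + 1 : ℕ) : ℝ) = (p:ℝ) + 1 := by push_cast; ring
        rw [hc, ff_step]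
        field_simp
      rw [sum_congr rfl hsplit, sum_add_distrib, keyR hpn]
      have hlast : ff (p:ℝ) (p + 1) / (ff (n : ℝ) (p + 1) * ((p:ℝ) + 1)) = 0 := by
        rw [ff_self_succ]; simp
      rw [sum_range_succ, hlast, add_zero, ih hpn.le, sum_range_succ]

noncomputable def Sn (n t : ℕ) : ℝ := ∑ j ∈ range t, 1 / ((n : ℝ) - j)

lemma keyB_step {p n : ℕ} (h : p < n) :
    ∑ k ∈ range (p + 1), ff (p : ℝ) k / ff (n : ℝ) (k + 1) * Sn n (k + 1) =
      1 / ((n : ℝ) - p) ^ 2 := by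
  have hnp : (0:ℝ) < (n : ℝ) - p := by
    have : (p : ℝ) < n := by exact_mod_cast h
    linarith
  have hterm : ∀ k ∈ range (p + 1),
      ff (p : ℝ) k / ff (n : ℝ) (k + 1) * Sn n (k + 1) =
        (ff (p:ℝ) k / ff (n:ℝ) k / ((n:ℝ) - p) * Sn n k
          - ff (p:ℝ) (k+1) / ff (n:ℝ) (k+1) / ((n:ℝ) - p) * Sn n (k+1))
          + ff (p : ℝ) k / ff (n : ℝ) (k + 1) * (1 / ((n:ℝ) - p)) := by
    intro k hk
    have hkp : k ≤ p := Nat.lt_succ_iff.1 (mem_range.1 hk)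
    have hkn : k < n := lt_of_le_of_lt hkp h
    have h1 : (0:ℝ) < ff (n : ℝ) k := ff_pos hkn.le
    have h2 : (0:ℝ) < ff (n : ℝ) (k + 1) := ff_pos hkn
    have hnk : (0:ℝ) < (n : ℝ) - k := by
      have : (k : ℝ) < n := by exact_mod_cast hkn
      linarith
    have hS : Sn n (k + 1) = Sn n k + 1 / ((n:ℝ) - k) := sum_range_succ _ _
    have hv : ff (p : ℝ) k / ff (n : ℝ) (k + 1) =
        (ff p k / ff n k - ff p (k+1) / ff n (k+1)) / ((n : ℝ) - p) := key_tele hkp h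
    have hv2 : ff (p:ℝ) k / ff (n:ℝ) k * (1 / ((n:ℝ) - k)) = ff (p:ℝ) k / ff (n:ℝ) (k+1) := by
      rw [ff_succ (n:ℝ)]
      field_simp
    calc ff (p : ℝ) k / ff (n : ℝ) (k + 1) * Sn n (k + 1)
        = (ff p k / ff n k - ff p (k+1) / ff n (k+1)) / ((n : ℝ) - p) * (Sn n k + 1 / ((n:ℝ) - k)) := by
          rw [← hS, ← hv]
      _ = (ff (p:ℝ) k / ff (n:ℝ) k / ((n:ℝ) - p) * Sn n k
          - ff (p:ℝ) (k+1) / ff (n:ℝ) (k+1) / ((n:ℝ) - p) * Sn n (k+1))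
          + (ff (p:ℝ) k / ff (n:ℝ) k * (1 / ((n:ℝ) - k))) * (1 / ((n:ℝ) - p)) := by
          rw [hS]; ring
      _ = _ := by rw [hv2]
  rw [sum_congr rfl hterm, sum_add_distrib]
  have htele := Finset.sum_range_sub'
    (fun k => ff (p:ℝ) k / ff (n:ℝ) k / ((n:ℝ) - p) * Sn n k) (p + 1)
  rw [htele, ← sum_mul, keyR h]
  simp [Sn, ff_self_succ]
  rw [← mul_inv, ← sq]

lemma keyB {n : ℕ} : ∀ p, p ≤ n →
    ∑ k ∈ range p, ff (p : ℝ) (k + 1) / (ff (n : ℝ) (k + 1) * ((k:ℝ) + 1)) * Sn n (k + 1) =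
      ∑ j ∈ range p, 1 / ((n : ℝ) - j) ^ 2 := by
  intro p
  induction p with
  | zero => simp
  | succ p ih =>
      intro hp
      have hpn : p < n := hp
      have hsplit : ∀ k ∈ range (p + 1),
          ff ((p:ℕ)+1 : ℕ) (k + 1) / (ff (n : ℝ) (k + 1) * ((k:ℝ) + 1)) * Sn n (k + 1) =
            ff (p:ℝ) (k + 1) / (ff (n : ℝ) (k + 1) * ((k:ℝ) + 1)) * Sn n (k + 1) +
              ff (p:ℝ) k / ff (n:ℝ) (k + 1) * Sn n (k + 1) := by
        intro k hk
        have hkn : k < n := lt_of_le_of_lt (Nat.lt_succ_iff.1 (mem_range.1 hk)) hpn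
        have h2 : (0:ℝ) < ff (n : ℝ) (k + 1) := ff_pos hkn
        have hc : ((p + 1 : ℕ) : ℝ) = (p:ℝ) + 1 := by push_cast; ring
        rw [hc, ff_step]
        field_simp
      rw [sum_congr rfl hsplit, sum_add_distrib, keyB_step hpn]
      have hlast : ff (p:ℝ) (p + 1) / (ff (n : ℝ) (p + 1) * ((p:ℝ) + 1)) * Sn n (p + 1) = 0 := by
        rw [ff_self_succ]; simp
      rw [sum_range_succ, hlast, add_zero, ih hpn.le, sum_range_succ]


lemma psi_zero_eq (x : ℝ) : psi 0 x = deriv lG x := by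
  simp only [psi, Nat.reduceAdd, iteratedDeriv_one]
  rfl

lemma psi_one_eq (x : ℝ) : psi 1 x = deriv (deriv lG) x := by
  have : iteratedDeriv 2 (fun y => Real.log (Real.Gamma y)) = deriv (deriv lG) := by
    rw [show (2:ℕ) = 1 + 1 from rfl, iteratedDeriv_succ, iteratedDeriv_one]
    rfl
  simp [psi, this]

noncomputable def Tn (n t : ℕ) : ℝ := ∑ j ∈ range t, 1 / ((n : ℝ) - j) ^ 2

theorem stmt_18 (m n : ℕ) (hm : 0 < m) (hmn : m ≤ n) :
    ∑ k ∈ Icc 1 m, ((Nat.factorial (n - k) : ℝ) / (Nat.factorial (m - k) : ℝ)) / (k : ℝ) * psi 0 ((n : ℝ) + 1 - k) =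
      ((Nat.factorial n : ℝ) / (Nat.factorial m : ℝ)) *
        (psi 1 ((n : ℝ) + 1) - psi 1 ((n : ℝ) - m + 1) +
          psi 0 ((n : ℝ) + 1) * (psi 0 ((n : ℝ) + 1) - psi 0 ((n : ℝ) - m + 1))) := by
  set a := deriv lG ((n:ℝ) + 1) with ha
  -- psi0 values
  have claim1 : ∀ i : ℕ, i < m → deriv lG ((n:ℝ) - i) = a - Sn n (i + 1) := by
    intro i hi
    have hin : i < n := lt_of_lt_of_le hi hmn
    have hx : (0:ℝ) < (n:ℝ) - i := by
      have : (i:ℝ) < n := by exact_mod_cast hin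
      linarith
    have h := shift0 hx (i + 1)
    have h1 : ((n:ℝ) - i + ((i + 1 : ℕ) : ℝ)) = (n:ℝ) + 1 := by push_cast; ring
    have h2 : Sn n (i + 1) = ∑ j ∈ range (i + 1), 1 / ((n:ℝ) - i + j) := by
      rw [Sn, ← Finset.sum_range_reflect]
      refine sum_congr rfl fun j hj => ?_
      have hj' : j ≤ i := by
        have := mem_range.1 hj; omega
      congr 1
      have e : i + 1 - 1 - j = i - j := by omega
      rw [e, Nat.cast_sub hj']
      ring
    rw [h1] at h
    rw [h2, ha]
    linarith
  have hpsi0 : ∀ i : ℕ, i < m → psi 0 ((n:ℝ) + 1 - ((1 + i : ℕ) : ℝ)) = a - Sn n (i + 1) := by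
    intro i hi
    have : (n:ℝ) + 1 - ((1 + i : ℕ) : ℝ) = (n:ℝ) - i := by push_cast; ring
    rw [this, psi_zero_eq, claim1 i hi]
  have hpsi0' : psi 0 ((n:ℝ) - m + 1) = a - Sn n m := by
    have h1 : (n:ℝ) - m + 1 = (n:ℝ) - ((m - 1 : ℕ) : ℝ) := by
      push_cast [Nat.cast_sub hm]; ring
    have h2 := claim1 (m - 1) (by omega)
    rw [psi_zero_eq, h1, h2]
    congr 2
    omega
  have hpsi1 : psi 1 ((n:ℝ) + 1) - psi 1 ((n:ℝ) - m + 1) = -Tn n m := by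
    have hx : (0:ℝ) < (n:ℝ) - m + 1 := by
      have : (m:ℝ) ≤ n := by exact_mod_cast hmn
      linarith
    have h := shift1 hx m
    have h1 : ((n:ℝ) - m + 1 + (m : ℝ)) = (n:ℝ) + 1 := by ring
    have h2 : Tn n m = ∑ j ∈ range m, 1 / ((n:ℝ) - m + 1 + j) ^ 2 := by
      rw [Tn, ← Finset.sum_range_reflect]
      refine sum_congr rfl fun j hj => ?_
      have hj' : j ≤ m - 1 := by
        have := mem_range.1 hj; omega
      congr 2
      have e : m - 1 - j = m - (1 + j) := by omega
      rw [e, Nat.cast_sub (by omega : 1 + j ≤ m)]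
      push_cast
      ring
    rw [h1] at h
    rw [psi_one_eq, psi_one_eq, h, h2]
    ring
  -- main computation
  have hcoef : ∀ i : ℕ, i < m →
      ((Nat.factorial (n - (1 + i)) : ℝ) / (Nat.factorial (m - (1 + i)) : ℝ)) / ((1 + i : ℕ) : ℝ) =
        ((Nat.factorial n : ℝ) / (Nat.factorial m : ℝ)) *
          (ff (m : ℝ) (i + 1) / (ff (n : ℝ) (i + 1) * ((i:ℝ) + 1))) := by
    intro i hi
    have him : i + 1 ≤ m := hi
    have hin : i + 1 ≤ n := le_trans him hmn
    have e1 : n - (1 + i) = n - (i + 1) := by omega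
    have e2 : m - (1 + i) = m - (i + 1) := by omega
    have hfn := ff_factorial hin
    have hfm := ff_factorial him
    have h1 : (0:ℝ) < ff (n : ℝ) (i + 1) := ff_pos hin
    have h2 : (0:ℝ) < ff (m : ℝ) (i + 1) := ff_pos him
    have h3 : (0:ℝ) < (Nat.factorial (m - (i+1)) : ℝ) := by positivity
    have h4 : (0:ℝ) < (Nat.factorial (n - (i+1)) : ℝ) := by positivity
    rw [e1, e2, ← hfn, ← hfm]
    have h5 : ((1 + i : ℕ) : ℝ) = (i : ℝ) + 1 := by push_cast; ring
    rw [h5]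
    field_simp
  have hIcc : ∑ k ∈ Icc 1 m, ((Nat.factorial (n - k) : ℝ) / (Nat.factorial (m - k) : ℝ)) / (k : ℝ) * psi 0 ((n : ℝ) + 1 - k) =
      ∑ i ∈ range m, ((Nat.factorial (n - (1 + i)) : ℝ) / (Nat.factorial (m - (1 + i)) : ℝ)) / ((1 + i : ℕ) : ℝ) * psi 0 ((n : ℝ) + 1 - ((1 + i : ℕ) : ℝ)) := by
    rw [← Finset.Ico_add_one_right_eq_Icc, Finset.sum_Ico_eq_sum_range]
    simp
  rw [hIcc]
  have hterm : ∀ i ∈ range m,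
      ((Nat.factorial (n - (1 + i)) : ℝ) / (Nat.factorial (m - (1 + i)) : ℝ)) / ((1 + i : ℕ) : ℝ) * psi 0 ((n : ℝ) + 1 - ((1 + i : ℕ) : ℝ)) =
        ((Nat.factorial n : ℝ) / (Nat.factorial m : ℝ)) *
          (ff (m : ℝ) (i + 1) / (ff (n : ℝ) (i + 1) * ((i:ℝ) + 1)) * a
            - ff (m : ℝ) (i + 1) / (ff (n : ℝ) (i + 1) * ((i:ℝ) + 1)) * Sn n (i + 1)) := by
    intro i hi
    have hi' : i < m := mem_range.1 hi
    rw [hcoef i hi', hpsi0 i hi']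
    ring
  have hpa : psi 0 ((n:ℝ) + 1) = a := by rw [psi_zero_eq, ha]
  rw [sum_congr rfl hterm, ← mul_sum, sum_sub_distrib, ← sum_mul, keyA m hmn, keyB m hmn,
    hpsi1, hpsi0', hpa]
  simp only [Sn, Tn]
  ring
end
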